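/- Let V be a real inner product space, let Ec, Ee : V → ℝ be convex functions with gradients gc(x) and ge(x) at every point x ∈ V respectively, set E = Ec − Ee, let T : V → V be a linear map satisfying ⟪T x, x⟫ ≤ 0 for all x ∈ V, and let h ≥ 0. If φ0, φ1 ∈ V satisfy the stabilization scheme φ1 − φ0 = h • T (gc(φ1) − ge(φ0)), then E(φ1) ≤ E(φ0). -/

import Mathlib

open RealInnerProductSpace

lemma convex_grad_ineq
    {V : Type*} [NormedAddCommGroup V] [InnerProductSpace ℝ V]
    {f : V → ℝ} (hf : ConvexOn ℝ Set.univ f) {g x : V}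
    (hd : HasFDerivAt f (innerSL ℝ g) x) (y : V) :
    f x + ⟪g, y - x⟫ ≤ f y := by
  have hpath : HasDerivAt (fun t : ℝ => f (x + t • (y - x))) ⟪g, y - x⟫ 0 := by
    have hd' : HasFDerivAt f (innerSL ℝ g) (x + (0:ℝ) • (y - x)) := by simpa using hd
    have := hd'.comp_hasDerivAt (f := fun t : ℝ => x + t • (y - x)) 0
      (((hasDerivAt_id (0:ℝ)).smul_const (y - x)).const_add x)
    have h' : HasDerivAt (f ∘ fun t : ℝ => x + t • (y - x)) ⟪g, y - x⟫ 0 := by simpa using this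
    exact h'
  have hslope : Filter.Tendsto (fun t : ℝ => (f (x + t • (y - x)) - f x) / t)
      (nhdsWithin 0 (Set.Ioi 0)) (nhds ⟪g, y - x⟫) := by
    have h1 := hasDerivAt_iff_tendsto_slope.mp hpath
    have h2 := h1.mono_left (nhdsWithin_mono 0 (fun t ht => ne_of_gt ht))
    refine h2.congr (fun t => ?_)
    simp [slope_def_field, div_eq_inv_mul, mul_comm]
  have hbound : ∀ᶠ t in nhdsWithin 0 (Set.Ioi 0),
      (f (x + t • (y - x)) - f x) / t ≤ f y - f x := by
    filter_upwards [Ioo_mem_nhdsGT_of_mem (Set.left_mem_Ico.mpr one_pos)] with t ht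
    have hconv := hf.2 (Set.mem_univ x) (Set.mem_univ y)
      (by linarith [ht.1, ht.2] : (0:ℝ) ≤ 1 - t) (le_of_lt ht.1) (by ring)
    have hx : x + t • (y - x) = (1 - t) • x + t • y := by
      simp [smul_sub, sub_smul]; abel
    rw [hx]
    simp only [smul_eq_mul] at hconv
    rw [div_le_iff₀ ht.1]
    calc f ((1-t) • x + t • y) - f x ≤ ((1-t) * f x + t * f y) - f x := by linarith [hconv]
      _ = (f y - f x) * t := by ring
  have := le_of_tendsto hslope hbound
  linarith

/-- Unconditional energy stability of the convex-splitting/stabilization relaxed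
DVD scheme (3.7) of the paper (part of Theorem 3.1). Here "`g` is a gradient of
`f` at `x`" means `f` is differentiable at `x` with derivative `v ↦ ⟪g, v⟫`. -/
theorem convex_splitting_scheme_energy_stable
    {V : Type*} [NormedAddCommGroup V] [InnerProductSpace ℝ V]
    (Ec Ee : V → ℝ) (gc ge : V → V)
    (hEc : ConvexOn ℝ Set.univ Ec) (hEe : ConvexOn ℝ Set.univ Ee)
    (hgc : ∀ x : V, HasFDerivAt Ec (innerSL ℝ (gc x)) x)
    (hge : ∀ x : V, HasFDerivAt Ee (innerSL ℝ (ge x)) x)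
    (T : V →ₗ[ℝ] V) (hT : ∀ x : V, ⟪T x, x⟫ ≤ 0)
    (h : ℝ) (hh : 0 ≤ h)
    (φ0 φ1 : V)
    (hscheme : φ1 - φ0 = h • T (gc φ1 - ge φ0)) :
    Ec φ1 - Ee φ1 ≤ Ec φ0 - Ee φ0 := by
  have h1 : Ec φ1 + ⟪gc φ1, φ0 - φ1⟫ ≤ Ec φ0 := convex_grad_ineq hEc (hgc φ1) φ0
  have h2 : Ee φ0 + ⟪ge φ0, φ1 - φ0⟫ ≤ Ee φ1 := convex_grad_ineq hEe (hge φ0) φ1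
  have key : ⟪gc φ1 - ge φ0, φ1 - φ0⟫ ≤ 0 := by
    rw [hscheme, real_inner_smul_right, real_inner_comm]
    exact mul_nonpos_of_nonneg_of_nonpos hh (hT _)
  have e1 : ⟪gc φ1, φ0 - φ1⟫ = -⟪gc φ1, φ1 - φ0⟫ := by
    rw [← inner_neg_right]; congr 1; abel
  have e2 : ⟪gc φ1 - ge φ0, φ1 - φ0⟫ = ⟪gc φ1, φ1 - φ0⟫ - ⟪ge φ0, φ1 - φ0⟫ :=
    inner_sub_left _ _ _
  linarith
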